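/- Let 0 < a_1 ≤ a_2 ≤ ... ≤ a_n be integers, t > 1 an integer with t ≤ n/2, T ∈ H_t, and k' a positive integer. Then it cannot happen that both: (i) there is a subset F ⊆ [2t-1] with T ⊆ F and Σ_{i∈F} a_i = k', and (ii) there is a subset G ⊆ [2t-1] with G ∩ T = ∅ and Σ_{i∈G} a_i = k'. -/

import Mathlib

def Ht (n t : ℕ) (T : Finset ℕ) : Prop :=
  T ⊆ Finset.Icc 1 n ∧ T.card = t ∧
  (∀ s ∈ T, (T.filter (· ≤ s)).card < t → 2 * (T.filter (· ≤ s)).card ≤ s) ∧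
  (∀ s ∈ T, (T.filter (· ≤ s)).card = t → s < 2 * t)

/-- for `0 < a₁ ≤ … ≤ a_n`, `1 < t ≤ n/2`, `T ∈ H_t` and a positive
integer `k'`, it cannot happen that both some `F ⊆ [2t-1]` with `T ⊆ F` has
weight `k'` and some `G ⊆ [2t-1]` disjoint from `T` has weight `k'`. -/
theorem stmt9 (n t : ℕ) (a : ℕ → ℕ)
    (hpos : ∀ i ∈ Finset.Icc 1 n, 0 < a i)
    (hmono : ∀ i j, 1 ≤ i → i ≤ j → j ≤ n → a i ≤ a j)
    (ht : 1 < t) (htn : 2 * t ≤ n) (T : Finset ℕ) (hT : Ht n t T)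
    (k' : ℕ) (hk' : 0 < k') :
    ¬ ((∃ F, F ⊆ Finset.Icc 1 (2 * t - 1) ∧ T ⊆ F ∧ (∑ i ∈ F, a i) = k') ∧
       (∃ G, G ⊆ Finset.Icc 1 (2 * t - 1) ∧ G ∩ T = ∅ ∧ (∑ i ∈ G, a i) = k')) := by
  rintro ⟨⟨F, hF1, hF2, hF3⟩, ⟨G, hG1, hG2, hG3⟩⟩
  obtain ⟨hT1, hT2, hT3, hT4⟩ := hT
  set N := 2 * t - 1 with hN
  have hNn : N ≤ n := by omega
  have hTne : T.Nonempty := Finset.card_pos.mp (by omega)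
  set M := T.max' hTne with hM
  have hMT : M ∈ T := T.max'_mem hTne
  have hfilterM : T.filter (· ≤ M) = T :=
    Finset.filter_true_of_mem fun x hx => Finset.le_max' T x hx
  have hMlt : M < 2 * t := hT4 M hMT (by rw [hfilterM, hT2])
  -- second largest element
  have hT'ne : (T.erase M).Nonempty := by
    rw [← Finset.card_pos, Finset.card_erase_of_mem hMT, hT2]; omega
  set M' := (T.erase M).max' hT'ne with hM'
  have hM'T' : M' ∈ T.erase M := (T.erase M).max'_mem hT'ne
  have hM'T : M' ∈ T := Finset.mem_of_mem_erase hM'T'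
  have hM'lt : M' < M :=
    lt_of_le_of_ne (Finset.le_max' T M' hM'T) (Finset.ne_of_mem_erase hM'T')
  have hfilterM' : T.filter (· ≤ M') = T.erase M := by
    ext x
    simp only [Finset.mem_filter, Finset.mem_erase]
    constructor
    · rintro ⟨hxT, hxM'⟩
      exact ⟨by omega, hxT⟩
    · rintro ⟨hxM, hxT⟩
      exact ⟨hxT, Finset.le_max' _ x (Finset.mem_erase.mpr ⟨hxM, hxT⟩)⟩
  have hM'ge : 2 * (t - 1) ≤ M' := by
    have hc : (T.filter (· ≤ M')).card = t - 1 := by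
      rw [hfilterM', Finset.card_erase_of_mem hMT, hT2]
    have := hT3 M' hM'T (by rw [hc]; omega)
    rw [hc] at this; exact this
  have hMeq : M = 2 * t - 1 := by omega
  have h2t1T : 2 * t - 1 ∈ T := hMeq ▸ hMT
  have hTsub : T ⊆ Finset.Icc 1 N := by
    intro x hx
    have h1 := hT1 hx
    rw [Finset.mem_Icc] at h1 ⊢
    exact ⟨h1.1, by have := Finset.le_max' T x hx; omega⟩
  -- key counting: T is sparse below each level m
  have key : ∀ m, 1 ≤ m → m ≤ N → 2 * (T.filter (· < m)).card ≤ m := by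
    intro m hm1 hmN
    by_cases hc : (T.filter (· < m)).card = 0
    · omega
    have hne : (T.filter (· < m)).Nonempty := Finset.card_pos.mp (by omega)
    set s := (T.filter (· < m)).max' hne with hs
    have hsmem : s ∈ T.filter (· < m) := (T.filter (· < m)).max'_mem hne
    have hsT : s ∈ T := (Finset.mem_filter.mp hsmem).1
    have hsm : s < m := (Finset.mem_filter.mp hsmem).2
    have heq : T.filter (· ≤ s) = T.filter (· < m) := by
      ext x
      simp only [Finset.mem_filter]
      constructor
      · rintro ⟨hxT, hxs⟩; exact ⟨hxT, lt_of_le_of_lt hxs hsm⟩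
      · rintro ⟨hxT, hxm⟩
        exact ⟨hxT, Finset.le_max' (T.filter (· < m)) x
          (Finset.mem_filter.mpr ⟨hxT, hxm⟩)⟩
    have hcle : (T.filter (· ≤ s)).card ≤ t := by
      rw [← hT2]; exact Finset.card_le_card (Finset.filter_subset _ _)
    rcases lt_or_eq_of_le hcle with hlt | heqt
    · have := hT3 s hsT hlt
      rw [heq] at this; omega
    · -- filter is all of T, so 2t-1 ≤ s < m ≤ 2t-1, contradiction
      have hall : T.filter (· ≤ s) = T :=
        Finset.eq_of_subset_of_card_le (Finset.filter_subset _ _) (by omega)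
      have : 2 * t - 1 ∈ T.filter (· ≤ s) := by rw [hall]; exact h2t1T
      have := (Finset.mem_filter.mp this).2
      omega
  set C := Finset.Icc 1 N \ T with hC
  -- upper-count comparison
  have hcards : ∀ m, 1 ≤ m → m ≤ N →
      (C.filter (m ≤ ·)).card ≤ (T.filter (m ≤ ·)).card := by
    intro m hm1 hmN
    have h1 : (T.filter (m ≤ ·)).card + (T.filter (· < m)).card = t := by
      rw [← hT2]
      have := Finset.card_filter_add_card_filter_not (s := T)
        (p := fun x => m ≤ x)
      simpa [not_le] using this
    have h2 : C.filter (m ≤ ·) = Finset.Icc m N \ T := by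
      ext x
      simp only [hC, Finset.mem_filter, Finset.mem_sdiff, Finset.mem_Icc]
      constructor
      · rintro ⟨⟨⟨hx1, hxN⟩, hxT⟩, hmx⟩; exact ⟨⟨hmx, hxN⟩, hxT⟩
      · rintro ⟨⟨hmx, hxN⟩, hxT⟩; exact ⟨⟨⟨by omega, hxN⟩, hxT⟩, hmx⟩
    have h3 : Finset.Icc m N ∩ T = T.filter (m ≤ ·) := by
      ext x
      simp only [Finset.mem_inter, Finset.mem_Icc, Finset.mem_filter]
      constructor
      · rintro ⟨⟨hmx, hxN⟩, hxT⟩; exact ⟨hxT, hmx⟩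
      · rintro ⟨hxT, hmx⟩
        have := Finset.mem_Icc.mp (hTsub hxT)
        exact ⟨⟨hmx, this.2⟩, hxT⟩
    have h4 : (C.filter (m ≤ ·)).card + (T.filter (m ≤ ·)).card
        = (Finset.Icc m N).card := by
      rw [h2, ← h3]
      exact Finset.card_sdiff_add_card_inter _ _
    have h5 : (Finset.Icc m N).card = N + 1 - m := Nat.card_Icc m N
    have h6 := key m hm1 hmN
    have h7 : (T.filter (m ≤ ·)).card ≤ t := by omega
    omega
  -- telescoping increments
  set d : ℕ → ℕ := fun m => if m = 1 then a 1 else a m - a (m - 1) with hd_def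
  have hd : ∀ x, 1 ≤ x → x ≤ n → ∑ m ∈ Finset.Icc 1 x, d m = a x := by
    intro x
    induction x with
    | zero => intro h; omega
    | succ x ih =>
      intro _ hxn
      by_cases hx0 : x = 0
      · subst hx0
        simp [hd_def]
      · rw [Finset.sum_Icc_succ_top (by omega : 1 ≤ x + 1),
          ih (by omega) (by omega)]
        have hax : a x ≤ a (x + 1) := hmono x (x + 1) (by omega) (by omega) hxn
        have hdx : d (x + 1) = a (x + 1) - a x := by
          simp only [hd_def, if_neg (by omega : ¬ x + 1 = 1), Nat.add_sub_cancel]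
        omega
  -- Abel summation
  have habel : ∀ S : Finset ℕ, S ⊆ Finset.Icc 1 N →
      ∑ x ∈ S, a x = ∑ m ∈ Finset.Icc 1 N, d m * (S.filter (m ≤ ·)).card := by
    intro S hS
    have step1 : ∑ x ∈ S, a x
        = ∑ x ∈ S, ∑ m ∈ Finset.Icc 1 N, if m ≤ x then d m else 0 := by
      apply Finset.sum_congr rfl
      intro x hx
      have hx' := Finset.mem_Icc.mp (hS hx)
      rw [← hd x hx'.1 (le_trans hx'.2 hNn)]
      rw [← Finset.sum_filter]
      congr 1
      ext m
      simp only [Finset.mem_filter, Finset.mem_Icc]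
      omega
    rw [step1, Finset.sum_comm]
    apply Finset.sum_congr rfl
    intro m _
    rw [← Finset.sum_filter, Finset.sum_const, smul_eq_mul, mul_comm]
  -- cardinalities at level 1
  have hCcard : C.card = t - 1 := by
    rw [hC, Finset.card_sdiff_of_subset hTsub, Nat.card_Icc, hT2]; omega
  have hfT1 : T.filter (fun x => 1 ≤ x) = T := by
    apply Finset.filter_true_of_mem
    intro x hx
    exact (Finset.mem_Icc.mp (hT1 hx)).1
  have hfC1 : C.filter (fun x => 1 ≤ x) = C := by
    apply Finset.filter_true_of_mem
    intro x hx
    exact (Finset.mem_Icc.mp (Finset.mem_sdiff.mp hx).1).1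
  have ha1 : 0 < a 1 := hpos 1 (Finset.mem_Icc.mpr ⟨le_refl 1, by omega⟩)
  -- the strict inequality
  have hmain : ∑ x ∈ C, a x < ∑ x ∈ T, a x := by
    rw [habel C Finset.sdiff_subset, habel T hTsub]
    apply Finset.sum_lt_sum
    · intro m hm
      have hm' := Finset.mem_Icc.mp hm
      exact Nat.mul_le_mul_left _ (hcards m hm'.1 hm'.2)
    · refine ⟨1, Finset.mem_Icc.mpr ⟨le_refl 1, by omega⟩, ?_⟩
      have hd1 : d 1 = a 1 := by simp [hd_def]
      rw [hd1]
      show a 1 * (C.filter (fun x => 1 ≤ x)).card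
          < a 1 * (T.filter (fun x => 1 ≤ x)).card
      rw [hfT1, hfC1, hT2, hCcard]
      exact mul_lt_mul_of_pos_left (by omega) ha1
  have hGC : G ⊆ C := by
    intro x hx
    rw [hC, Finset.mem_sdiff]
    refine ⟨hG1 hx, fun hxT => ?_⟩
    have : x ∈ G ∩ T := Finset.mem_inter.mpr ⟨hx, hxT⟩
    rw [hG2] at this
    exact absurd this (Finset.notMem_empty x)
  have h1 : ∑ x ∈ G, a x ≤ ∑ x ∈ C, a x :=
    Finset.sum_le_sum_of_subset hGC
  have h2 : ∑ x ∈ T, a x ≤ ∑ x ∈ F, a x :=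
    Finset.sum_le_sum_of_subset hF2
  omega
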